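/- Let p be a prime and k a field of characteristic p. Let B be the subgroup of GL₂(ℚ_p) consisting of invertible upper triangular matrices, regarded as a topological group with the topology induced from the p-adic topology on 2×2 matrices over ℚ_p. Let V be a k-vector space with a k-linear representation ρ of B that is smooth (every vector of V is fixed by some open subgroup of B) and admissible (for every compact open subgroup H of B, the subspace V^H of H-fixed vectors is finite-dimensional over k). Then the unipotent radical of B acts trivially on V: for every b ∈ ℚ_p, the matrix [[1, b], [0, 1]] acts as the identity on V. -/

import Mathlib

open Matrix

variable (p : ℕ) [Fact p.Prime]

/-- The Borel subgroup of upper triangular matrices in `GL₂(ℚ_p)`. -/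
def BorelGL2 : Subgroup (GL (Fin 2) ℚ_[p]) where
  carrier := {g | (g : Matrix (Fin 2) (Fin 2) ℚ_[p]) 1 0 = 0}
  one_mem' := by simp
  mul_mem' := by
    intro a b ha hb
    simp only [Set.mem_setOf_eq, Units.val_mul, Matrix.mul_apply, Fin.sum_univ_two] at *
    rw [ha, hb, zero_mul, mul_zero, add_zero]
  inv_mem' := by
    intro a ha
    simp only [Set.mem_setOf_eq] at *
    rw [Matrix.coe_units_inv, Matrix.inv_def, Matrix.adjugate_fin_two]
    simp [ha]

/-- The unipotent matrix `[[1, b], [0, 1]]` as an element of `GL₂(ℚ_p)`. -/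
noncomputable def unipotentGL2 (b : ℚ_[p]) : GL (Fin 2) ℚ_[p] where
  val := !![1, b; 0, 1]
  inv := !![1, -b; 0, 1]
  val_inv := by
    rw [Matrix.mul_fin_two, Matrix.one_fin_two]
    norm_num
  inv_val := by
    rw [Matrix.mul_fin_two, Matrix.one_fin_two]
    norm_num

lemma unipotentGL2_mem_Borel (b : ℚ_[p]) : unipotentGL2 p b ∈ BorelGL2 p := by
  show (!![(1:ℚ_[p]), b; 0, 1]) 1 0 = 0
  simp

/-- The subspace of vectors fixed by every element of a subgroup `H`. -/
def fixedVectors {k G V : Type*} [Field k] [Group G] [AddCommGroup V] [Module k V]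
    (ρ : Representation k G V) (H : Subgroup G) : Submodule k V where
  carrier := {v | ∀ g ∈ H, ρ g v = v}
  add_mem' := fun {a b} ha hb g hg => by rw [map_add, ha g hg, hb g hg]
  zero_mem' := fun g hg => by simp
  smul_mem' := fun c v hv g hg => by rw [_root_.map_smul, hv g hg]

namespace UT
noncomputable section

variable {p}

abbrev M2 (p : ℕ) [Fact p.Prime] := Matrix (Fin 2) (Fin 2) ℚ_[p]

def rad (p : ℕ) (n : ℕ) : ℝ := (p : ℝ) ^ (-(n + 1 : ℤ))

def KnSet (p : ℕ) [Fact p.Prime] (n : ℕ) : Set (M2 p) :=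
  {A | ‖A 0 0 - 1‖ ≤ rad p n ∧ ‖A 0 1‖ ≤ rad p n ∧ A 1 0 = 0 ∧ ‖A 1 1 - 1‖ ≤ rad p n}

lemma mem_KnSet_iff {n : ℕ} {A : M2 p} : A ∈ KnSet p n ↔
    ‖A 0 0 - 1‖ ≤ rad p n ∧ ‖A 0 1‖ ≤ rad p n ∧ A 1 0 = 0 ∧ ‖A 1 1 - 1‖ ≤ rad p n :=
  Iff.rfl

/-- explicit inverse of an upper triangular 2x2 matrix -/
def invM (A : M2 p) : M2 p := !![(A 0 0)⁻¹, -(A 0 1 * ((A 0 0)⁻¹ * (A 1 1)⁻¹)); 0, (A 1 1)⁻¹]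

lemma eta_upper {A : M2 p} (h : A 1 0 = 0) : A = !![A 0 0, A 0 1; 0, A 1 1] := by
  conv_lhs => rw [Matrix.eta_fin_two A]
  rw [h]

lemma mul_invM {A : M2 p} (h10 : A 1 0 = 0) (ha : A 0 0 ≠ 0) (hd : A 1 1 ≠ 0) :
    A * invM A = 1 := by
  ext i j
  rw [Matrix.mul_apply, Fin.sum_univ_two]
  fin_cases i <;> fin_cases j <;>
    simp [invM, h10, Matrix.one_apply] <;> field_simp <;> ring

lemma invM_mul {A : M2 p} (h10 : A 1 0 = 0) (ha : A 0 0 ≠ 0) (hd : A 1 1 ≠ 0) :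
    invM A * A = 1 := by
  ext i j
  rw [Matrix.mul_apply, Fin.sum_univ_two]
  fin_cases i <;> fin_cases j <;>
    simp [invM, h10, Matrix.one_apply] <;> field_simp <;> ring


lemma norm_eq_one_of_close {x : ℚ_[p]} {n : ℕ} (h : ‖x - 1‖ ≤ rad p n) : ‖x‖ = 1 := by
  have hp1 : (1:ℝ) < p := by exact_mod_cast (Fact.out : p.Prime).one_lt
  have hlt : ‖x - 1‖ < 1 := by
    refine lt_of_le_of_lt h ?_
    calc rad p n < (p:ℝ)^(0:ℤ) := zpow_lt_zpow_right₀ hp1 (by omega)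
    _ = 1 := by norm_num
  have h1 : ‖x‖ ≤ 1 := by
    have hx : x = (x - 1) + 1 := by ring
    rw [hx]
    refine le_trans (Padic.nonarchimedean _ _) ?_
    simp [le_of_lt hlt]
  have h2 : (1:ℝ) ≤ ‖x‖ := by
    by_contra hc
    push_neg at hc
    have hx : (1 : ℚ_[p]) = (1 - x) + x := by ring
    have hb := Padic.nonarchimedean (1 - x) x
    rw [← hx, norm_one, show (1:ℚ_[p]) - x = -(x-1) by ring, norm_neg] at hb
    rcases max_cases ‖x-1‖ ‖x‖ with ⟨he,_⟩|⟨he,_⟩ <;> rw [he] at hb <;> linarith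
  linarith

lemma ne_zero_of_close {x : ℚ_[p]} {n : ℕ} (h : ‖x - 1‖ ≤ rad p n) : x ≠ 0 := by
  intro h0
  have := norm_eq_one_of_close h
  rw [h0] at this; simp at this

/-- The inverse of a unit whose matrix is in `KnSet` is given by `invM`. -/
lemma coe_inv_eq_invM {g : GL (Fin 2) ℚ_[p]} {n : ℕ} (hg : (g : M2 p) ∈ KnSet p n) :
    ((g⁻¹ : GL (Fin 2) ℚ_[p]) : M2 p) = invM (g : M2 p) := by
  obtain ⟨h1, h2, h3, h4⟩ := hg
  exact Units.inv_eq_of_mul_eq_one_right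
    (mul_invM h3 (ne_zero_of_close h1) (ne_zero_of_close h4))

lemma close_mul {x y : ℚ_[p]} {n : ℕ} (hx : ‖x - 1‖ ≤ rad p n) (hy : ‖y - 1‖ ≤ rad p n) :
    ‖x * y - 1‖ ≤ rad p n := by
  have key : x * y - 1 = (x - 1) * y + (y - 1) := by ring
  rw [key]
  refine le_trans (Padic.nonarchimedean _ _) (max_le ?_ hy)
  rw [norm_mul, norm_eq_one_of_close hy, mul_one]
  exact hx

lemma close_inv {x : ℚ_[p]} {n : ℕ} (hx : ‖x - 1‖ ≤ rad p n) : ‖x⁻¹ - 1‖ ≤ rad p n := by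
  have hx0 : x ≠ 0 := ne_zero_of_close hx
  have key : x⁻¹ - 1 = (1 - x) * x⁻¹ := by field_simp
  rw [key, norm_mul, norm_inv, norm_eq_one_of_close hx, inv_one, mul_one,
    show (1:ℚ_[p]) - x = -(x-1) by ring, norm_neg]
  exact hx

/-- The congruence subgroups of the Borel. -/
def Kn (p : ℕ) [Fact p.Prime] (n : ℕ) : Subgroup (BorelGL2 p) where
  carrier := {g | ((g : GL (Fin 2) ℚ_[p]) : M2 p) ∈ KnSet p n}
  one_mem' := by
    have : (0:ℝ) ≤ rad p n := le_of_lt (zpow_pos (by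
      exact_mod_cast (Fact.out : p.Prime).pos) _)
    refine ⟨?_, ?_, ?_, ?_⟩ <;> simp [Matrix.one_apply] <;> assumption
  mul_mem' := by
    rintro a b ⟨ha1, ha2, ha3, ha4⟩ ⟨hb1, hb2, hb3, hb4⟩
    have hmul : ∀ i j, ((↑(↑(a*b) : GL (Fin 2) ℚ_[p]) : M2 p)) i j =
        ((a : GL (Fin 2) ℚ_[p]) : M2 p) i 0 * ((b : GL (Fin 2) ℚ_[p]) : M2 p) 0 j + ((a : GL (Fin 2) ℚ_[p]) : M2 p) i 1 * ((b : GL (Fin 2) ℚ_[p]) : M2 p) 1 j := by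
      intro i j
      rw [show ((↑(a*b) : GL (Fin 2) ℚ_[p]) : M2 p) = ((a : GL (Fin 2) ℚ_[p]) : M2 p) * ((b : GL (Fin 2) ℚ_[p]) : M2 p) from rfl]
      rw [Matrix.mul_apply, Fin.sum_univ_two]
    refine ⟨?_, ?_, ?_, ?_⟩
    · rw [hmul 0 0, hb3, mul_zero, add_zero]
      exact close_mul ha1 hb1
    · rw [hmul 0 1]
      refine le_trans (Padic.nonarchimedean _ _) (max_le ?_ ?_)
      · rw [norm_mul, norm_eq_one_of_close ha1, one_mul]; exact hb2
      · rw [norm_mul, norm_eq_one_of_close hb4, mul_one]; exact ha2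
    · rw [hmul 1 0, ha3, hb3, mul_zero, zero_mul, add_zero]
    · rw [hmul 1 1, ha3, zero_mul, zero_add]
      exact close_mul ha4 hb4
  inv_mem' := by
    rintro a ha
    obtain ⟨ha1, ha2, ha3, ha4⟩ := ha
    have hco : ((↑(a⁻¹) : GL (Fin 2) ℚ_[p]) : M2 p) = invM ((↑a : GL (Fin 2) ℚ_[p]) : M2 p) :=
      coe_inv_eq_invM ⟨ha1, ha2, ha3, ha4⟩
    rw [Set.mem_setOf_eq, hco]
    refine ⟨?_, ?_, ?_, ?_⟩
    · simpa [invM] using close_inv ha1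
    · have : (invM ((↑a : GL (Fin 2) ℚ_[p]) : M2 p)) 0 1 =
          -(((a : GL (Fin 2) ℚ_[p]) : M2 p) 0 1 *
            ((((a : GL (Fin 2) ℚ_[p]) : M2 p) 0 0)⁻¹ *
             (((a : GL (Fin 2) ℚ_[p]) : M2 p) 1 1)⁻¹)) := by simp [invM]
      rw [this, norm_neg, norm_mul, norm_mul, norm_inv, norm_inv,
        norm_eq_one_of_close ha1, norm_eq_one_of_close ha4]
      simpa using ha2
    · simp [invM]
    · simpa [invM] using close_inv ha4

lemma mem_Kn_iff {n : ℕ} {g : BorelGL2 p} :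
    g ∈ Kn p n ↔ ((g : GL (Fin 2) ℚ_[p]) : M2 p) ∈ KnSet p n := Iff.rfl


lemma rad_antitone {m n : ℕ} (h : m ≤ n) : rad p n ≤ rad p m := by
  apply zpow_le_zpow_right₀ ?_ (by omega)
  exact_mod_cast le_of_lt (Fact.out : p.Prime).one_lt

lemma KnSet_antitone {m n : ℕ} (h : m ≤ n) : KnSet p n ⊆ KnSet p m := by
  rintro A ⟨h1, h2, h3, h4⟩
  exact ⟨le_trans h1 (rad_antitone h), le_trans h2 (rad_antitone h), h3,
    le_trans h4 (rad_antitone h)⟩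

lemma isOpen_Kn (n : ℕ) : IsOpen ((Kn p n : Set (BorelGL2 p))) := by
  have hcont : Continuous (fun g : BorelGL2 p => ((g : GL (Fin 2) ℚ_[p]) : M2 p)) :=
    Units.continuous_val.comp continuous_subtype_val
  have hiff : ∀ x : ℚ_[p], ‖x‖ ≤ rad p n ↔ ‖x‖ < (p:ℝ)^(-(n:ℤ)) := by
    intro x
    have := Padic.norm_le_pow_iff_norm_lt_pow_add_one x (-(n+1:ℤ))
    rw [show (-(n+1:ℤ)+1) = -(n:ℤ) by ring] at this
    exact this
  have hopen1 : ∀ (i j : Fin 2) (c : ℚ_[p]),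
      IsOpen {A : M2 p | ‖A i j - c‖ < (p:ℝ)^(-(n:ℤ))} := by
    intro i j c
    have : {A : M2 p | ‖A i j - c‖ < (p:ℝ)^(-(n:ℤ))} =
        (fun A : M2 p => A i j) ⁻¹' Metric.ball c ((p:ℝ)^(-(n:ℤ))) := by
      ext A; simp [Metric.mem_ball, dist_eq_norm]
    rw [this]
    exact Metric.isOpen_ball.preimage (continuous_id.matrix_elem i j)
  have hset : (Kn p n : Set (BorelGL2 p)) =
      (fun g : BorelGL2 p => ((g : GL (Fin 2) ℚ_[p]) : M2 p)) ⁻¹'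
        ({A : M2 p | ‖A 0 0 - 1‖ < (p:ℝ)^(-(n:ℤ))} ∩
         ({A : M2 p | ‖A 0 1 - 0‖ < (p:ℝ)^(-(n:ℤ))} ∩
          {A : M2 p | ‖A 1 1 - 1‖ < (p:ℝ)^(-(n:ℤ))})) := by
    ext g
    have h10 : ((g : GL (Fin 2) ℚ_[p]) : M2 p) 1 0 = 0 := g.2
    constructor
    · rintro ⟨h1, h2, _, h4⟩
      exact ⟨(hiff _).1 h1, by simpa using (hiff _).1 h2, (hiff _).1 h4⟩
    · rintro ⟨h1, h2, h4⟩
      exact ⟨(hiff _).2 h1, (hiff _).2 (by simpa using h2), h10, (hiff _).2 h4⟩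
  rw [hset]
  exact ((hopen1 0 0 1).inter ((hopen1 0 1 0).inter (hopen1 1 1 1))).preimage hcont

lemma isCompact_KnSet (n : ℕ) : IsCompact (KnSet p n) := by
  classical
  set S : Fin 2 → Fin 2 → Set ℚ_[p] :=
    ![![Metric.closedBall 1 (rad p n), Metric.closedBall 0 (rad p n)],
      ![{0}, Metric.closedBall 1 (rad p n)]] with hSdef
  have hS : ∀ i j, IsCompact (S i j) := by
    intro i j
    fin_cases i <;> fin_cases j <;>
      first
        | exact isCompact_singleton
        | exact isCompact_closedBall _ _
  have heq : KnSet p n = Set.univ.pi (fun i => Set.univ.pi fun j => S i j) := by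
    ext A
    constructor
    · rintro ⟨h1, h2, h3, h4⟩
      intro i _ j _
      fin_cases i <;> fin_cases j
      · show A 0 0 ∈ Metric.closedBall 1 (rad p n)
        rw [Metric.mem_closedBall, dist_eq_norm]; exact h1
      · show A 0 1 ∈ Metric.closedBall 0 (rad p n)
        rw [Metric.mem_closedBall, dist_eq_norm]; simpa using h2
      · show A 1 0 ∈ ({0} : Set ℚ_[p])
        exact h3
      · show A 1 1 ∈ Metric.closedBall 1 (rad p n)
        rw [Metric.mem_closedBall, dist_eq_norm]; exact h4
    · intro h
      have h00 : A 0 0 ∈ Metric.closedBall 1 (rad p n) := h 0 (Set.mem_univ _) 0 (Set.mem_univ _)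
      have h01 : A 0 1 ∈ Metric.closedBall 0 (rad p n) := h 0 (Set.mem_univ _) 1 (Set.mem_univ _)
      have h10 : A 1 0 ∈ ({0} : Set ℚ_[p]) := h 1 (Set.mem_univ _) 0 (Set.mem_univ _)
      have h11 : A 1 1 ∈ Metric.closedBall 1 (rad p n) := h 1 (Set.mem_univ _) 1 (Set.mem_univ _)
      rw [Metric.mem_closedBall, dist_eq_norm] at h00 h01 h11
      exact ⟨h00, by simpa using h01, h10, h11⟩
  rw [heq]
  exact isCompact_univ_pi fun i => isCompact_univ_pi fun j => hS i j

/-- The embedding of a matrix together with its inverse. -/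
def fInv (A : M2 p) : M2 p × (M2 p)ᵐᵒᵖ := (A, MulOpposite.op (invM A))

lemma continuousOn_fInv (n : ℕ) : ContinuousOn (fInv (p := p)) (KnSet p n) := by
  have h00 : ContinuousOn (fun A : M2 p => (A 0 0)⁻¹) (KnSet p n) :=
    ContinuousOn.inv₀ (continuous_id.matrix_elem 0 0).continuousOn
      (fun A hA => ne_zero_of_close hA.1)
  have h11 : ContinuousOn (fun A : M2 p => (A 1 1)⁻¹) (KnSet p n) :=
    ContinuousOn.inv₀ (continuous_id.matrix_elem 1 1).continuousOn
      (fun A hA => ne_zero_of_close hA.2.2.2)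
  have h01 : ContinuousOn (fun A : M2 p => A 0 1) (KnSet p n) :=
    (continuous_id.matrix_elem 0 1).continuousOn
  have hinvM : ContinuousOn (invM (p := p)) (KnSet p n) := by
    rw [continuousOn_iff_continuous_restrict]
    apply continuous_matrix
    intro i j
    fin_cases i <;> fin_cases j <;> simp only [invM, Set.restrict_apply] <;>
      simp only [Matrix.cons_val', Matrix.cons_val_zero, Matrix.cons_val_one,
        Matrix.head_cons, Matrix.head_fin_const, Matrix.empty_val',
        Matrix.cons_val_fin_one, Matrix.of_apply]
    · exact (continuousOn_iff_continuous_restrict.1 h00)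
    · exact (continuousOn_iff_continuous_restrict.1
        ((h01.mul (h00.mul h11)).neg))
    · exact continuous_const
    · exact (continuousOn_iff_continuous_restrict.1 h11)
  exact (continuousOn_id.prodMk (MulOpposite.continuous_op.comp_continuousOn hinvM))

lemma isCompact_Kn (n : ℕ) : IsCompact ((Kn p n : Set (BorelGL2 p))) := by
  rw [Topology.IsInducing.subtypeVal.isCompact_iff,
    Units.isInducing_embedProduct.isCompact_iff]
  have himg : Units.embedProduct (M2 p) '' (Subtype.val '' ((Kn p n : Set (BorelGL2 p)))) =
      fInv (p := p) '' KnSet p n := by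
    ext x
    constructor
    · rintro ⟨g, ⟨b, hb, rfl⟩, rfl⟩
      refine ⟨((b : GL (Fin 2) ℚ_[p]) : M2 p), hb, ?_⟩
      rw [fInv, Units.embedProduct_apply, ← coe_inv_eq_invM hb]
    · rintro ⟨A, hA, rfl⟩
      obtain ⟨h1, h2, h3, h4⟩ := hA
      set gA : GL (Fin 2) ℚ_[p] :=
        ⟨A, invM A, mul_invM h3 (ne_zero_of_close h1) (ne_zero_of_close h4),
          invM_mul h3 (ne_zero_of_close h1) (ne_zero_of_close h4)⟩ with hgA
      have hmem : gA ∈ BorelGL2 p := h3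
      refine ⟨gA, ⟨⟨gA, hmem⟩, ⟨h1, h2, h3, h4⟩, rfl⟩, ?_⟩
      rw [Units.embedProduct_apply, fInv]
      rfl
  show IsCompact (⇑(Units.embedProduct (M2 p)) '' (Subtype.val '' ((Kn p n : Set (BorelGL2 p)))))
  rw [himg]
  exact (isCompact_KnSet n).image_of_continuousOn (continuousOn_fInv n)


lemma rad_eq (n : ℕ) : rad p n = ((p:ℝ)⁻¹) ^ (n + 1) := by
  rw [rad, show (-(n+1:ℤ)) = -((n+1:ℕ):ℤ) by push_cast; ring, _root_.zpow_neg, ← _root_.inv_zpow,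
    zpow_natCast]

lemma exists_rad_lt {ε : ℝ} (hε : 0 < ε) : ∃ n : ℕ, rad p n < ε := by
  have hp1 : (1:ℝ) < p := by exact_mod_cast (Fact.out : p.Prime).one_lt
  have hinv : (p:ℝ)⁻¹ < 1 := by
    rw [inv_lt_one_iff₀]; right; exact hp1
  obtain ⟨n, hn⟩ := exists_pow_lt_of_lt_one hε hinv
  refine ⟨n, ?_⟩
  rw [rad_eq]
  refine lt_of_le_of_lt ?_ hn
  apply pow_le_pow_of_le_one (by positivity) (le_of_lt hinv) (by omega)

lemma eventually_KnSet {S : Set (M2 p)} (hS : S ∈ nhds (1 : M2 p)) :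
    ∃ n, KnSet p n ⊆ S := by
  have hφ : Continuous (fun x : ℚ_[p] × ℚ_[p] × ℚ_[p] => (!![x.1, x.2.1; 0, x.2.2] : M2 p)) := by
    apply continuous_matrix
    intro i j
    fin_cases i <;> fin_cases j
    · exact continuous_fst
    · exact continuous_fst.comp continuous_snd
    · exact continuous_const
    · exact continuous_snd.comp continuous_snd
  have h1 : (!![(1:ℚ_[p]), 0; 0, 1] : M2 p) = 1 := (Matrix.one_fin_two).symm
  have hpre : (fun x : ℚ_[p] × ℚ_[p] × ℚ_[p] => (!![x.1, x.2.1; 0, x.2.2] : M2 p)) ⁻¹' S ∈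
      nhds (((1 : ℚ_[p]), (0:ℚ_[p]), (1:ℚ_[p]))) := by
    apply hφ.continuousAt.preimage_mem_nhds
    simpa [h1] using hS
  obtain ⟨ε, hε, hball⟩ := Metric.mem_nhds_iff.1 hpre
  obtain ⟨n, hn⟩ := exists_rad_lt (p := p) hε
  refine ⟨n, fun A hA => ?_⟩
  obtain ⟨h1', h2', h3', h4'⟩ := hA
  have hmem : ((A 0 0, A 0 1, A 1 1) : ℚ_[p] × ℚ_[p] × ℚ_[p]) ∈
      Metric.ball (((1:ℚ_[p]), (0:ℚ_[p]), (1:ℚ_[p]))) ε := by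
    rw [Metric.mem_ball, Prod.dist_eq, Prod.dist_eq]
    rw [dist_eq_norm, dist_eq_norm, dist_eq_norm]
    apply lt_of_le_of_lt (max_le h1' (max_le (by simpa using h2') h4')) hn
  have := hball hmem
  rw [Set.mem_preimage] at this
  rwa [← eta_upper h3'] at this

lemma exists_Kn_le {H : Subgroup (BorelGL2 p)} (hH : IsOpen (H : Set (BorelGL2 p))) :
    ∃ n, Kn p n ≤ H := by
  have hind : Topology.IsInducing (fun g : BorelGL2 p =>
      Units.embedProduct (M2 p) (g : GL (Fin 2) ℚ_[p])) :=
    Units.isInducing_embedProduct.comp Topology.IsInducing.subtypeVal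
  have hmem : (H : Set (BorelGL2 p)) ∈ nhds (1 : BorelGL2 p) := hH.mem_nhds H.one_mem
  rw [hind.nhds_eq_comap, Filter.mem_comap] at hmem
  obtain ⟨S, hS, hSsub⟩ := hmem
  have h1 : Units.embedProduct (M2 p) ((1 : BorelGL2 p) : GL (Fin 2) ℚ_[p]) =
      ((1 : M2 p), MulOpposite.op (1 : M2 p)) := by
    simp [Units.embedProduct_apply]
  rw [h1] at hS
  obtain ⟨S1, hS1, S2, hS2, hprod⟩ := mem_nhds_prod_iff.1 hS
  have hS2' : {A : M2 p | MulOpposite.op A ∈ S2} ∈ nhds (1 : M2 p) :=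
    MulOpposite.continuous_op.continuousAt.preimage_mem_nhds (by simpa using hS2)
  obtain ⟨n1, hn1⟩ := eventually_KnSet hS1
  obtain ⟨n2, hn2⟩ := eventually_KnSet hS2'
  refine ⟨max n1 n2, fun g hg => ?_⟩
  apply hSsub
  rw [Set.mem_preimage]
  apply hprod
  constructor
  · exact hn1 (KnSet_antitone (le_max_left n1 n2) hg)
  · exact hn2 (KnSet_antitone (le_max_right n1 n2) ((Kn p (max n1 n2)).inv_mem hg))


lemma p_ne_zero : ((p:ℚ_[p])) ≠ 0 :=
  Nat.cast_ne_zero.mpr (Fact.out : p.Prime).ne_zero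

/-- The diagonal torus element diag(p, 1). -/
def tGL (p : ℕ) [Fact p.Prime] : GL (Fin 2) ℚ_[p] where
  val := !![(p:ℚ_[p]), 0; 0, 1]
  inv := !![(p:ℚ_[p])⁻¹, 0; 0, 1]
  val_inv := by
    rw [Matrix.mul_fin_two, Matrix.one_fin_two]
    norm_num [mul_inv_cancel₀ (p_ne_zero (p := p))]
  inv_val := by
    rw [Matrix.mul_fin_two, Matrix.one_fin_two]
    norm_num [inv_mul_cancel₀ (p_ne_zero (p := p))]

lemma tGL_mem : tGL p ∈ BorelGL2 p := by
  show (!![(p:ℚ_[p]), 0; 0, 1]) 1 0 = 0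
  simp

/-- The diagonal torus element as an element of the Borel. -/
def tB (p : ℕ) [Fact p.Prime] : BorelGL2 p := ⟨tGL p, tGL_mem⟩

lemma t_mul_u (x : ℚ_[p]) :
    tGL p * unipotentGL2 p x = unipotentGL2 p ((p:ℚ_[p]) * x) * tGL p := by
  apply Units.ext
  show (!![(p:ℚ_[p]), 0; 0, 1] : M2 p) * !![1, x; 0, 1] =
    !![1, (p:ℚ_[p]) * x; 0, 1] * !![(p:ℚ_[p]), 0; 0, 1]
  rw [Matrix.mul_fin_two, Matrix.mul_fin_two]
  norm_num

lemma tpow_mul_u (m : ℕ) (x : ℚ_[p]) :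
    (tGL p) ^ m * unipotentGL2 p x = unipotentGL2 p ((p:ℚ_[p]) ^ m * x) * (tGL p) ^ m := by
  induction m generalizing x with
  | zero => simp
  | succ m ih =>
    rw [pow_succ, mul_assoc, t_mul_u, ← mul_assoc, ih ((p:ℚ_[p]) * x), mul_assoc, ← pow_succ]
    congr 2
    ring

lemma u_mem_Kn {n : ℕ} {c : ℚ_[p]} (hc : ‖c‖ ≤ rad p n) :
    (⟨unipotentGL2 p c, unipotentGL2_mem_Borel p c⟩ : BorelGL2 p) ∈ Kn p n := by
  have hr : (0:ℝ) ≤ rad p n := le_of_lt (zpow_pos (by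
    exact_mod_cast (Fact.out : p.Prime).pos) _)
  refine ⟨?_, ?_, ?_, ?_⟩
  · show ‖(!![(1:ℚ_[p]), c; 0, 1]) 0 0 - 1‖ ≤ rad p n
    norm_num; exact hr
  · show ‖(!![(1:ℚ_[p]), c; 0, 1]) 0 1‖ ≤ rad p n
    simpa using hc
  · show (!![(1:ℚ_[p]), c; 0, 1]) 1 0 = 0
    simp
  · show ‖(!![(1:ℚ_[p]), c; 0, 1]) 1 1 - 1‖ ≤ rad p n
    norm_num; exact hr

lemma conj_mem_Kn {n : ℕ} {g : BorelGL2 p} (hg : g ∈ Kn p n) :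
    tB p * g * (tB p)⁻¹ ∈ Kn p n := by
  obtain ⟨h1, h2, h3, h4⟩ := hg
  set A : M2 p := ((g : GL (Fin 2) ℚ_[p]) : M2 p) with hA
  have key : (((tB p * g * (tB p)⁻¹ : BorelGL2 p) : GL (Fin 2) ℚ_[p]) : M2 p) =
      !![A 0 0, (p:ℚ_[p]) * A 0 1; 0, A 1 1] := by
    show (!![(p:ℚ_[p]), 0; 0, 1] : M2 p) * A * !![(p:ℚ_[p])⁻¹, 0; 0, 1] =
      !![A 0 0, (p:ℚ_[p]) * A 0 1; 0, A 1 1]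
    rw [eta_upper h3, Matrix.mul_fin_two, Matrix.mul_fin_two]
    have hp0 := p_ne_zero (p := p)
    ext i j
    fin_cases i <;> fin_cases j <;> simp <;> field_simp
  rw [mem_Kn_iff, key]
  have hp_le : ‖(p:ℚ_[p])‖ ≤ 1 := by
    rw [Padic.norm_p]
    apply inv_le_one_of_one_le₀
    exact_mod_cast (Fact.out : p.Prime).one_le
  refine ⟨by simpa using h1, ?_, by simp, by simpa using h4⟩
  · show ‖(p:ℚ_[p]) * A 0 1‖ ≤ rad p n
    rw [norm_mul]
    calc ‖(p:ℚ_[p])‖ * ‖A 0 1‖ ≤ 1 * ‖A 0 1‖ :=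
      mul_le_mul_of_nonneg_right hp_le (norm_nonneg _)
    _ = ‖A 0 1‖ := one_mul _
    _ ≤ rad p n := h2

end
end UT

/-- For a smooth admissible representation of the Borel subgroup of `GL₂(ℚ_p)` over a field of
characteristic `p`, the unipotent radical acts trivially. -/
theorem unipotent_acts_trivially_on_smooth_admissible
    (k : Type*) [Field k] (hchar : CharP k p)
    (V : Type*) [AddCommGroup V] [Module k V]
    (ρ : Representation k (BorelGL2 p) V)
    (hsmooth : ∀ v : V, ∃ H : Subgroup (BorelGL2 p),
      IsOpen (H : Set (BorelGL2 p)) ∧ ∀ g ∈ H, ρ g v = v)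
    (hadm : ∀ H : Subgroup (BorelGL2 p),
      IsOpen (H : Set (BorelGL2 p)) → IsCompact (H : Set (BorelGL2 p)) →
      FiniteDimensional k (fixedVectors ρ H))
    (b : ℚ_[p]) (v : V) :
    ρ ⟨unipotentGL2 p b, unipotentGL2_mem_Borel p b⟩ v = v := by
  classical
  obtain ⟨H, hHopen, hHfix⟩ := hsmooth v
  obtain ⟨n, hKn⟩ := UT.exists_Kn_le hHopen
  set W := fixedVectors ρ (UT.Kn p n) with hWdef
  haveI : FiniteDimensional k W := hadm _ (UT.isOpen_Kn n) (UT.isCompact_Kn n)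
  have hvW : v ∈ W := fun g hg => hHfix g (hKn hg)
  set t : BorelGL2 p := UT.tB p with htdef
  have hstab : ∀ w ∈ W, (ρ t⁻¹) w ∈ W := by
    intro w hw g hg
    have hconj : t * g * t⁻¹ ∈ UT.Kn p n := UT.conj_mem_Kn hg
    have hkey : (ρ g) ((ρ t⁻¹) w) = (ρ t⁻¹) ((ρ (t * g * t⁻¹)) w) := by
      rw [← Module.End.mul_apply, ← _root_.map_mul, ← Module.End.mul_apply, ← _root_.map_mul]
      congr 2
      group
    rw [hkey, hw _ hconj]
  let φ : W →ₗ[k] W := (ρ t⁻¹).restrict hstab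
  have hinj : Function.Injective φ := by
    intro x y hxy
    have h1 : (ρ t⁻¹) (x : V) = (ρ t⁻¹) (y : V) := congrArg Subtype.val hxy
    have h2 := congrArg (ρ t) h1
    rw [← Module.End.mul_apply, ← Module.End.mul_apply, ← _root_.map_mul,
      mul_inv_cancel, _root_.map_one, Module.End.one_apply, Module.End.one_apply] at h2
    exact Subtype.ext h2
  have hsurj : Function.Surjective φ := LinearMap.surjective_of_injective hinj
  have hiter : ∀ m : ℕ, ∃ w ∈ W, (ρ (t⁻¹ ^ m)) w = v := by
    intro m
    induction m with
    | zero => exact ⟨v, hvW, by simp⟩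
    | succ m ih =>
      obtain ⟨w1, hw1, hweq⟩ := ih
      obtain ⟨w2, hw2⟩ := hsurj ⟨w1, hw1⟩
      refine ⟨(w2 : V), w2.2, ?_⟩
      have hval : (ρ t⁻¹) (w2 : V) = w1 := congrArg Subtype.val hw2
      rw [pow_succ, _root_.map_mul, Module.End.mul_apply, hval, hweq]
  obtain ⟨m, hm⟩ : ∃ m : ℕ, ‖(p:ℚ_[p]) ^ m * b‖ ≤ UT.rad p n := by
    have hradpos : 0 < UT.rad p n := zpow_pos (by
      exact_mod_cast (Fact.out : p.Prime).pos) _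
    have hbpos : (0:ℝ) < ‖b‖ + 1 := by positivity
    have hinv : (p:ℝ)⁻¹ < 1 := by
      rw [inv_lt_one_iff₀]; right
      exact_mod_cast (Fact.out : p.Prime).one_lt
    obtain ⟨m, hm⟩ := exists_pow_lt_of_lt_one (div_pos hradpos hbpos) hinv
    refine ⟨m, ?_⟩
    rw [norm_mul, Padic.norm_p_pow]
    have heq : ((p:ℝ)) ^ (-(m:ℤ)) = ((p:ℝ)⁻¹) ^ m := by
      rw [_root_.zpow_neg, ← _root_.inv_zpow, zpow_natCast]
    rw [heq]
    have h1 : ((p:ℝ)⁻¹) ^ m * ‖b‖ ≤ ((p:ℝ)⁻¹) ^ m * (‖b‖ + 1) := by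
      apply mul_le_mul_of_nonneg_left (by linarith) (by positivity)
    have h2 : ((p:ℝ)⁻¹) ^ m * (‖b‖ + 1) < UT.rad p n := by
      rw [← lt_div_iff₀ hbpos]
      exact hm
    linarith
  obtain ⟨w, hwW, hweq⟩ := hiter m
  have humem : (⟨unipotentGL2 p ((p:ℚ_[p]) ^ m * b),
      unipotentGL2_mem_Borel p _⟩ : BorelGL2 p) ∈ UT.Kn p n := UT.u_mem_Kn hm
  have hgrp : (⟨unipotentGL2 p b, unipotentGL2_mem_Borel p b⟩ : BorelGL2 p) * t⁻¹ ^ m =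
      t⁻¹ ^ m * ⟨unipotentGL2 p ((p:ℚ_[p]) ^ m * b), unipotentGL2_mem_Borel p _⟩ := by
    apply Subtype.ext
    show unipotentGL2 p b * ((UT.tGL p)⁻¹) ^ m =
      ((UT.tGL p)⁻¹) ^ m * unipotentGL2 p ((p:ℚ_[p]) ^ m * b)
    rw [inv_pow]
    have h := UT.tpow_mul_u (p := p) m b
    have h2 : unipotentGL2 p b * ((UT.tGL p) ^ m)⁻¹ =
        ((UT.tGL p) ^ m)⁻¹ * ((UT.tGL p) ^ m * unipotentGL2 p b * ((UT.tGL p) ^ m)⁻¹) := by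
      group
    rw [h2, h]
    group
  have hfix : (ρ ⟨unipotentGL2 p b, unipotentGL2_mem_Borel p b⟩) ((ρ (t⁻¹ ^ m)) w) =
      (ρ (t⁻¹ ^ m)) w := by
    rw [← Module.End.mul_apply, ← _root_.map_mul, hgrp, _root_.map_mul, Module.End.mul_apply,
      hwW _ humem]
  rw [← hweq, hfix]
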